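/- Let d be a squarefree positive integer and let Ω be a finite subset of ℤ². Then #{x ∈ Ω : d ∣ q₁(x)·q₂(x)⋯q_g(x)} = Σ μ(d)·μ(c₁)⋯μ(c_g) · #{x ∈ Ω : c_i ∣ q_i(x) for all i}, where the sum is over all g-tuples (c₁,…,c_g) of positive integers with c_i ∣ d for every i and d ∣ c₁·c₂⋯c_g, and μ denotes the Möbius function. -/

import Mathlib

open Finset
section Helpers
open ArithmeticFunction
open scoped ArithmeticFunction.Moebius

open scoped Classical

lemma sum_mu (m : ℕ) : ∑ t ∈ m.divisors, (μ t : ℤ) = if m = 1 then 1 else 0 := by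
  rw [← ArithmeticFunction.coe_mul_zeta_apply, ArithmeticFunction.moebius_mul_coe_zeta,
    ArithmeticFunction.one_apply]

lemma sum_mu_filter {m k : ℕ} {P : ℕ → Prop} [DecidablePred P] (h : ∀ t, (t ∈ k.divisors ∧ P t) ↔ t ∈ m.divisors) :
    ∑ t ∈ k.divisors, (if P t then (μ t : ℤ) else 0) = if m = 1 then 1 else 0 := by
  rw [← Finset.sum_filter, ← sum_mu m]
  apply Finset.sum_congr _ (fun _ _ => rfl)
  ext t
  simp only [Finset.mem_filter]
  exact h t

/-- key indicator identity: for `c i ∣ d`, `d` squarefree,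
`[d ∣ ∏ c] = ∑_{t ∣ d, ∀ i coprime t (c i)} μ t`. -/
lemma lemma_ind {g : ℕ} (d : ℕ) (hd : d ≠ 0) (hsf : Squarefree d)
    (c : Fin g → ℕ) (hc : ∀ i, c i ∣ d) :
    ∑ t ∈ d.divisors, (if ∀ i, Nat.Coprime t (c i) then (μ t : ℤ) else 0) =
      if d ∣ ∏ i, c i then 1 else 0 := by
  set G := Nat.gcd d (∏ i, c i) with hGdef
  have hG : G ∣ d := Nat.gcd_dvd_left _ _
  set m := d / G with hmdef
  have hmG : m * G = d := Nat.div_mul_cancel hG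
  have hsf' : Squarefree (m * G) := by rw [hmG]; exact hsf
  have cop : Nat.Coprime m G := (Nat.squarefree_mul_iff.mp hsf').1
  have hm : m ∣ d := ⟨G, hmG.symm⟩
  have hmne : m ≠ 0 := fun h => hd (by rw [← hmG, h, zero_mul])
  have key : ∀ t, (t ∈ d.divisors ∧ ∀ i, Nat.Coprime t (c i)) ↔ t ∈ m.divisors := by
    intro t
    simp only [Nat.mem_divisors]
    constructor
    · rintro ⟨⟨htd, _⟩, hcop⟩
      refine ⟨?_, hmne⟩
      have h1 : Nat.Coprime t (∏ i, c i) := Nat.Coprime.prod_right (fun i _ => hcop i)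
      have h2 : Nat.Coprime t G := Nat.Coprime.coprime_dvd_right (Nat.gcd_dvd_right _ _) h1
      exact h2.dvd_of_dvd_mul_right (hmG ▸ htd)
    · rintro ⟨htm, _⟩
      refine ⟨⟨htm.trans hm, hd⟩, fun i => ?_⟩
      have hciG : c i ∣ G := Nat.dvd_gcd (hc i) (Finset.dvd_prod_of_mem _ (Finset.mem_univ i))
      have : Nat.Coprime t G := Nat.Coprime.coprime_dvd_left htm cop
      exact Nat.Coprime.coprime_dvd_right hciG this
  rw [sum_mu_filter key]
  congr 1
  simp only [eq_iff_iff]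
  constructor
  · intro h1
    have : d = G := by rw [← hmG, h1, one_mul]
    exact this ▸ Nat.gcd_dvd_right _ _
  · intro hdvd
    have : G = d := Nat.gcd_eq_left hdvd
    rw [hmdef, this, Nat.div_self (Nat.pos_of_ne_zero hd)]

/-- `∑_{c ∣ e, coprime t c} μ c = [e ∣ t]` for `e` squarefree. -/
lemma lemma2 (e : ℕ) (he0 : e ≠ 0) (hse : Squarefree e) (t : ℕ) :
    ∑ c ∈ e.divisors, (if Nat.Coprime t c then (μ c : ℤ) else 0) = if e ∣ t then 1 else 0 := by
  set G := Nat.gcd e t with hGdef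
  have hG : G ∣ e := Nat.gcd_dvd_left _ _
  set m := e / G with hmdef
  have hmG : m * G = e := Nat.div_mul_cancel hG
  have hsf' : Squarefree (m * G) := by rw [hmG]; exact hse
  have cop : Nat.Coprime m G := (Nat.squarefree_mul_iff.mp hsf').1
  have hm : m ∣ e := ⟨G, hmG.symm⟩
  have hmne : m ≠ 0 := fun h => he0 (by rw [← hmG, h, zero_mul])
  have copmt : Nat.Coprime m t := by
    have h1 : Nat.gcd m t ∣ G := Nat.dvd_gcd ((Nat.gcd_dvd_left m t).trans hm) (Nat.gcd_dvd_right m t)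
    have h2 : Nat.gcd m t ∣ Nat.gcd m G := Nat.dvd_gcd (Nat.gcd_dvd_left m t) h1
    exact Nat.eq_one_of_dvd_one (cop ▸ h2)
  have key : ∀ c, (c ∈ e.divisors ∧ Nat.Coprime t c) ↔ c ∈ m.divisors := by
    intro c
    simp only [Nat.mem_divisors]
    constructor
    · rintro ⟨⟨hce, _⟩, hcop⟩
      refine ⟨?_, hmne⟩
      have h2 : Nat.Coprime c G := Nat.Coprime.coprime_dvd_right (Nat.gcd_dvd_right e t) hcop.symm
      exact h2.dvd_of_dvd_mul_right (hmG ▸ hce)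
    · rintro ⟨hcm, _⟩
      exact ⟨⟨hcm.trans hm, he0⟩, (Nat.Coprime.coprime_dvd_left hcm copmt).symm⟩
  rw [sum_mu_filter key]
  congr 1
  simp only [eq_iff_iff]
  constructor
  · intro h1
    have : e = G := by rw [← hmG, h1, one_mul]
    exact this ▸ Nat.gcd_dvd_right _ _
  · intro hdvd
    have : G = e := Nat.gcd_eq_left hdvd
    rw [hmdef, this, Nat.div_self (Nat.pos_of_ne_zero he0)]

lemma sq_dvd {s m : ℕ} (hs : Squarefree s) (h : ∀ p : ℕ, p.Prime → p ∣ s → p ∣ m) : s ∣ m := by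
  rw [← Nat.prod_primeFactors_of_squarefree hs]
  exact Finset.prod_primes_dvd _ (fun p hp => (Nat.prime_of_mem_primeFactors hp).prime)
    (fun p hp => h p (Nat.prime_of_mem_primeFactors hp) (Nat.dvd_of_mem_primeFactors hp))

lemma mu_sq {s : ℕ} (hs : Squarefree s) : (μ s : ℤ) * μ s = 1 := by
  rw [ArithmeticFunction.moebius_apply_of_squarefree hs, ← pow_add]
  exact (neg_one_pow_eq_one_iff_even (by norm_num)).mpr ⟨_, rfl⟩

lemma mu_div {s d : ℕ} (hsd : s ∣ d) (hsf : Squarefree d) : (μ (d / s) : ℤ) = μ d * μ s := by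
  have hmul : s * (d / s) = d := Nat.mul_div_cancel' hsd
  have hsf' : Squarefree (s * (d / s)) := by rw [hmul]; exact hsf
  obtain ⟨cop, hss, _⟩ := Nat.squarefree_mul_iff.mp hsf'
  have h1 : (ArithmeticFunction.moebius d : ℤ) = μ s * μ (d / s) := by
    have := ArithmeticFunction.isMultiplicative_moebius.map_mul_of_coprime cop
    rw [hmul] at this; exact_mod_cast this
  have h2 := mu_sq hss
  calc (μ (d / s) : ℤ) = (μ s * μ s) * μ (d / s) := by rw [h2, one_mul]
    _ = μ d * μ s := by rw [h1]; ring

lemma prod_ind {g : ℕ} (P : Fin g → Prop) [DecidablePred P] :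
    (∏ i, if P i then (1:ℤ) else 0) = if ∀ i, P i then 1 else 0 := by
  by_cases h : ∀ i, P i
  · simp [h]
  · rw [if_neg h]
    obtain ⟨i, hi⟩ := not_forall.mp h
    exact Finset.prod_eq_zero (Finset.mem_univ i) (if_neg hi)

lemma dvd_div_iff_cop {s d e : ℕ} (hsd : s ∣ d) (hsf : Squarefree d) (hed : e ∣ d) :
    e ∣ d / s ↔ Nat.Coprime s e := by
  have hmul : s * (d / s) = d := Nat.mul_div_cancel' hsd
  have hsf' : Squarefree (s * (d / s)) := by rw [hmul]; exact hsf
  have cop : Nat.Coprime s (d / s) := (Nat.squarefree_mul_iff.mp hsf').1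
  constructor
  · intro h
    exact Nat.Coprime.coprime_dvd_right h cop
  · intro h
    exact Nat.Coprime.dvd_of_dvd_mul_left h.symm (by rw [hmul]; exact hed)

lemma key_lemma {g : ℕ} (d : ℕ) (hd : d ≠ 0) (hsf : Squarefree d) (e : Fin g → ℕ)
    (he : ∀ i, e i ∣ d) :
    (ArithmeticFunction.moebius d : ℤ) * ∑ ct ∈ Fintype.piFinset (fun i => (e i).divisors),
      (if d ∣ ∏ i, ct i then ∏ i, (ArithmeticFunction.moebius (ct i) : ℤ) else 0) =
    if d ∣ ∏ i, e i then 1 else 0 := by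
  have he0 : ∀ i, e i ≠ 0 := fun i h => hd (zero_dvd_iff.mp (h ▸ he i))
  have hse : ∀ i, Squarefree (e i) := fun i => (hsf.squarefree_of_dvd (he i))
  have step1 : ∑ ct ∈ Fintype.piFinset (fun i => (e i).divisors),
      (if d ∣ ∏ i, ct i then ∏ i, (ArithmeticFunction.moebius (ct i) : ℤ) else 0) =
      ∑ t ∈ d.divisors, ∑ ct ∈ Fintype.piFinset (fun i => (e i).divisors),
        (if ∀ i, Nat.Coprime t (ct i) then (μ t : ℤ) else 0) * ∏ i, (ArithmeticFunction.moebius (ct i) : ℤ) := by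
    rw [Finset.sum_comm]
    apply Finset.sum_congr rfl
    intro ct hct
    rw [← Finset.sum_mul, lemma_ind d hd hsf ct
      (fun i => ((Nat.mem_divisors.mp ((Fintype.mem_piFinset).mp hct i)).1).trans (he i)),
      ite_mul, one_mul, zero_mul]
  rw [step1]
  have step2 : ∀ t ∈ d.divisors, ∑ ct ∈ Fintype.piFinset (fun i => (e i).divisors),
      (if ∀ i, Nat.Coprime t (ct i) then (μ t : ℤ) else 0) * ∏ i, (ArithmeticFunction.moebius (ct i) : ℤ) =
      (μ t : ℤ) * (if ∀ i, e i ∣ t then 1 else 0) := by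
    intro t _
    have inner : ∀ ct : Fin g → ℕ,
        (if ∀ i, Nat.Coprime t (ct i) then (μ t : ℤ) else 0) * ∏ i, (ArithmeticFunction.moebius (ct i) : ℤ) =
        (μ t : ℤ) * ∏ i, (if Nat.Coprime t (ct i) then (ArithmeticFunction.moebius (ct i) : ℤ) else 0) := by
      intro ct
      by_cases h : ∀ i, Nat.Coprime t (ct i)
      · rw [if_pos h]
        exact congrArg (fun z => (μ t : ℤ) * z)
          (Finset.prod_congr rfl fun i _ => (if_pos (h i)).symm)
      · obtain ⟨i, hi⟩ := not_forall.mp h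
        rw [if_neg h, zero_mul,
          Finset.prod_eq_zero (Finset.mem_univ i)
            (if_neg hi : (if Nat.Coprime t (ct i) then (ArithmeticFunction.moebius (ct i) : ℤ) else 0) = 0), mul_zero]
    simp_rw [inner]
    rw [← Finset.mul_sum]
    congr 1
    have hps : (∏ i, ∑ cc ∈ (e i).divisors, if Nat.Coprime t cc then (μ cc : ℤ) else 0)
        = ∑ ct ∈ Fintype.piFinset (fun i => (e i).divisors),
            ∏ i, if Nat.Coprime t (ct i) then (ArithmeticFunction.moebius (ct i) : ℤ) else 0 :=
      Finset.prod_univ_sum _ _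
    rw [← hps, ← prod_ind (fun i => e i ∣ t)]
    exact Finset.prod_congr rfl (fun i _ => lemma2 (e i) (he0 i) (hse i) t)
  rw [Finset.sum_congr rfl step2]
  rw [← Nat.sum_div_divisors d (fun t => (μ t : ℤ) * (if ∀ i, e i ∣ t then 1 else 0))]
  have step3 : ∀ s ∈ d.divisors,
      (μ (d / s) : ℤ) * (if ∀ i, e i ∣ d / s then 1 else 0) =
      (ArithmeticFunction.moebius d : ℤ) * (if ∀ i, Nat.Coprime s (e i) then (μ s : ℤ) else 0) := by
    intro s hs
    have hsd : s ∣ d := (Nat.mem_divisors.mp hs).1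
    rw [mu_div hsd hsf]
    have : (∀ i, e i ∣ d / s) ↔ (∀ i, Nat.Coprime s (e i)) :=
      forall_congr' (fun i => dvd_div_iff_cop hsd hsf (he i))
    rw [if_congr this rfl rfl]
    by_cases h : ∀ i, Nat.Coprime s (e i) <;> simp [h]
  rw [Finset.sum_congr rfl step3, ← Finset.mul_sum, lemma_ind d hd hsf e he, ← mul_assoc,
    mu_sq hsf, one_mul]

end Helpers

/-- The binary quadratic form `q_i(x,y) = a_i x^2 + 2 b_i x y + c_i y^2`. -/
def qf {g : ℕ} (a b c : Fin g → ℤ) (i : Fin g) (x : ℤ × ℤ) : ℤ :=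
  a i * x.1 ^ 2 + 2 * b i * x.1 * x.2 + c i * x.2 ^ 2

open scoped Classical in
/-- inclusion–exclusion formula counting points where `d` divides the
product of the forms. -/
theorem stmt15 (g : ℕ) (hg : 2 ≤ g) (a b c : Fin g → ℤ)
    (d : ℕ) (hd : 0 < d) (hsf : Squarefree d) (Ω : Finset (ℤ × ℤ)) :
    ((Ω.filter fun x => (d : ℤ) ∣ ∏ i, qf a b c i x).card : ℤ) =
      ∑ ct ∈ (Fintype.piFinset fun _ : Fin g => d.divisors).filter
          (fun ct => d ∣ ∏ i, ct i),
        ArithmeticFunction.moebius d * (∏ i, ArithmeticFunction.moebius (ct i)) *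
          ((Ω.filter fun x => ∀ i, (ct i : ℤ) ∣ qf a b c i x).card : ℤ) := by

  classical
  have hd0 : d ≠ 0 := hd.ne'
  have hL : ((Ω.filter fun x => (d : ℤ) ∣ ∏ i, qf a b c i x).card : ℤ)
      = ∑ x ∈ Ω, (if (d : ℤ) ∣ ∏ i, qf a b c i x then (1:ℤ) else 0) := by
    rw [Finset.card_filter]
    push_cast
    rfl
  have hR : ∀ ct : Fin g → ℕ, ((Ω.filter fun x => ∀ i, (ct i : ℤ) ∣ qf a b c i x).card : ℤ)
      = ∑ x ∈ Ω, (if ∀ i, (ct i : ℤ) ∣ qf a b c i x then (1:ℤ) else 0) := by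
    intro ct
    rw [Finset.card_filter]
    push_cast
    rfl
  simp_rw [hR, Finset.mul_sum]
  rw [Finset.sum_comm, hL]
  apply Finset.sum_congr rfl
  intro x hx
  set N : Fin g → ℕ := fun i => (qf a b c i x).natAbs with hN
  set e : Fin g → ℕ := fun i => Nat.gcd d (N i) with he'
  have he : ∀ i, e i ∣ d := fun i => Nat.gcd_dvd_left _ _
  have he0 : ∀ i, e i ≠ 0 := fun i h => hd0 (Nat.gcd_eq_zero_iff.mp h).1
  rw [Finset.sum_filter]
  have hswap : ∀ ct : Fin g → ℕ,
      (if d ∣ ∏ i, ct i then (ArithmeticFunction.moebius d : ℤ) * (∏ i, (ArithmeticFunction.moebius (ct i) : ℤ)) *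
          (if ∀ i, (ct i : ℤ) ∣ qf a b c i x then (1:ℤ) else 0) else 0)
      = (if ∀ i, (ct i : ℤ) ∣ qf a b c i x then
          (if d ∣ ∏ i, ct i then (ArithmeticFunction.moebius d : ℤ) * ∏ i, (ArithmeticFunction.moebius (ct i) : ℤ) else 0) else 0) := by
    intro ct; split_ifs <;> ring
  simp_rw [hswap]
  rw [← Finset.sum_filter]
  have hset : (Fintype.piFinset fun _ : Fin g => d.divisors).filter
        (fun ct => ∀ i, (ct i : ℤ) ∣ qf a b c i x)
      = Fintype.piFinset (fun i => (e i).divisors) := by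
    ext ct
    simp only [Finset.mem_filter, Fintype.mem_piFinset, Nat.mem_divisors]
    constructor
    · rintro ⟨h1, h2⟩ i
      exact ⟨Nat.dvd_gcd (h1 i).1 (Int.natCast_dvd_natCast.mp (Int.dvd_natAbs.mpr (h2 i))),
        he0 i⟩
    · intro h
      refine ⟨fun i => ⟨((h i).1).trans (he i), hd0⟩, fun i => ?_⟩
      have : ct i ∣ N i := ((h i).1).trans (Nat.gcd_dvd_right _ _)
      exact Int.dvd_natAbs.mp (Int.natCast_dvd_natCast.mpr this)
  rw [hset]
  have hpull : ∀ ct : Fin g → ℕ,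
      (if d ∣ ∏ i, ct i then (ArithmeticFunction.moebius d : ℤ) * ∏ i, (ArithmeticFunction.moebius (ct i) : ℤ) else 0)
      = (ArithmeticFunction.moebius d : ℤ) * (if d ∣ ∏ i, ct i then ∏ i, (ArithmeticFunction.moebius (ct i) : ℤ) else 0) := by
    intro ct; split_ifs <;> ring
  simp_rw [hpull]
  rw [← Finset.mul_sum, key_lemma d hd0 hsf e he]
  have hNd : ((d : ℤ) ∣ ∏ i, qf a b c i x) ↔ d ∣ ∏ i, N i := by
    rw [← Int.natCast_dvd_natCast, Nat.cast_prod]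
    constructor
    · intro h
      exact h.trans (Finset.prod_dvd_prod_of_dvd _ _ fun i _ => Int.dvd_natAbs.mpr dvd_rfl)
    · intro h
      exact h.trans (Finset.prod_dvd_prod_of_dvd _ _ fun i _ => Int.natAbs_dvd.mpr dvd_rfl)
  have hfinal : (d ∣ ∏ i, N i) ↔ d ∣ ∏ i, e i := by
    constructor
    · intro h
      apply sq_dvd hsf
      intro p pp hpd
      obtain ⟨i, _, hpN⟩ := (pp.prime.dvd_finset_prod_iff _).mp (hpd.trans h)
      exact (Nat.dvd_gcd hpd hpN).trans (Finset.dvd_prod_of_mem _ (Finset.mem_univ i))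
    · intro h
      exact h.trans (Finset.prod_dvd_prod_of_dvd _ _ fun i _ => Nat.gcd_dvd_right _ _)
  rw [if_congr (hNd.trans hfinal) rfl rfl]
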